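/- Let r ≥ 2 and consider the graph whose nodes are r red nodes forming a clique, together with, for each red node, r − 1 blue leaf nodes adjacent only to that red node (so there are n = r² nodes in total, each red node has degree 2(r − 1), and each blue node has degree 1). With C = 2 classes (red and blue), the class homophily of this graph equals h_class = 1/2 − 1/r. In particular, h_class → 1/2 as r → ∞ even though no blue node has any same-class neighbor, so this family witnesses that class homophily can be far from zero on non-homophilous graphs. -/

import Mathlib

open Finset

/-- The node set of the clique-with-leaves graph: `r` red clique nodes
(`Sum.inl`) and, for each red node, `r − 1` blue leaves (`Sum.inr`). -/
def CliqueLeavesV (r : ℕ) := Fin r ⊕ Fin r × Fin (r - 1)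

instance (r : ℕ) : Fintype (CliqueLeavesV r) := by unfold CliqueLeavesV; infer_instance
instance (r : ℕ) : DecidableEq (CliqueLeavesV r) := by unfold CliqueLeavesV; infer_instance

/-- Adjacency of the clique-with-leaves graph: red nodes form a clique, and the
blue leaf `(j, k)` is adjacent only to the red node `j`. -/
def cliqueLeavesAdj (r : ℕ) : CliqueLeavesV r → CliqueLeavesV r → Prop
  | Sum.inl i, Sum.inl j => i ≠ j
  | Sum.inl i, Sum.inr p => i = p.1
  | Sum.inr p, Sum.inl i => i = p.1
  | Sum.inr _, Sum.inr _ => False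

instance (r : ℕ) : DecidableRel (cliqueLeavesAdj r) := fun a b =>
  match a, b with
  | Sum.inl i, Sum.inl j => inferInstanceAs (Decidable (i ≠ j))
  | Sum.inl i, Sum.inr p => inferInstanceAs (Decidable (i = p.1))
  | Sum.inr p, Sum.inl i => inferInstanceAs (Decidable (i = p.1))
  | Sum.inr _, Sum.inr _ => inferInstanceAs (Decidable False)

/-- A node is red iff it is a clique node. -/
def isRed {r : ℕ} : CliqueLeavesV r → Prop
  | Sum.inl _ => True
  | Sum.inr _ => False

instance (r : ℕ) : DecidablePred (@isRed r) := fun v =>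
  match v with
  | Sum.inl _ => inferInstanceAs (Decidable True)
  | Sum.inr _ => inferInstanceAs (Decidable False)

instance instAdjSum (r : ℕ) (a b : Fin r ⊕ Fin r × Fin (r - 1)) : Decidable (cliqueLeavesAdj r a b) :=
  (inferInstance : DecidableRel (cliqueLeavesAdj r)) a b
instance instRedSum (r : ℕ) (a : Fin r ⊕ Fin r × Fin (r - 1)) : Decidable (@isRed r a) :=
  (inferInstance : DecidablePred (@isRed r)) a
instance instAdjInl (r : ℕ) (i : Fin r) (b : CliqueLeavesV r) : Decidable (cliqueLeavesAdj r (Sum.inl i) b) :=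
  (inferInstance : DecidableRel (cliqueLeavesAdj r)) _ b
instance instAdjInr (r : ℕ) (p : Fin r × Fin (r - 1)) (b : CliqueLeavesV r) : Decidable (cliqueLeavesAdj r (Sum.inr p) b) :=
  (inferInstance : DecidableRel (cliqueLeavesAdj r)) _ b

/-- **Class homophily is far from zero on a non-homophilous graph.**
For the clique-with-leaves graph with `r ≥ 2`: there are `n = r²` nodes, each
red node has degree `2(r − 1)`, each blue node has degree `1`, and the class
homophily (with `C = 2` classes) equals `1/2 − 1/r`. -/
lemma sum_ite_ne (r : ℕ) (i : Fin r) : (∑ x : Fin r, if i = x then (0:ℕ) else 1) = r - 1 := by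
  have : ∀ x : Fin r, (if i = x then (0:ℕ) else 1) = (if ¬ (i = x) then 1 else 0) := by
    intro x; by_cases h : i = x <;> simp [h]
  simp only [this, ← Finset.card_filter]
  rw [Finset.filter_not]
  simp [Finset.filter_eq, Finset.card_sdiff]

lemma fiber1 (r : ℕ) (i : Fin r) :
    (univ.filter (fun p : Fin r × Fin (r-1) => i = p.1)).card = r - 1 := by
  rw [Finset.card_filter, Fintype.sum_prod_type]
  simp [apply_ite Finset.card, Finset.sum_ite_eq]

lemma cardV (r : ℕ) : Fintype.card (CliqueLeavesV r) = r + r * (r - 1) := by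
  show Fintype.card (Fin r ⊕ Fin r × Fin (r-1)) = _
  simp

lemma degRed (r : ℕ) (i : Fin r) :
    (univ.filter (fun u => cliqueLeavesAdj r (Sum.inl i) u)).card = 2 * (r - 1) := by
  rw [Finset.card_filter]
  show (∑ u : Fin r ⊕ Fin r × Fin (r-1), if cliqueLeavesAdj r (Sum.inl i) u then 1 else 0) = _
  rw [Fintype.sum_sum_type]
  show (∑ x : Fin r, if ¬ (i = x) then 1 else 0) + (∑ x : Fin r × Fin (r-1), if i = x.1 then 1 else 0) = _
  simp only [ite_not, sum_ite_ne]
  have h2 : (∑ x : Fin r × Fin (r-1), if i = x.1 then (1:ℕ) else 0) = r - 1 := by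
    rw [Fintype.sum_prod_type]
    simp [apply_ite Finset.card, Finset.sum_ite_eq]
  rw [Fintype.sum_prod_type] at h2 ⊢
  omega

lemma degBlue (r : ℕ) (p : Fin r × Fin (r-1)) :
    (univ.filter (fun u => cliqueLeavesAdj r (Sum.inr p) u)).card = 1 := by
  rw [Finset.card_filter]
  show (∑ u : Fin r ⊕ Fin r × Fin (r-1), if cliqueLeavesAdj r (Sum.inr p) u then 1 else 0) = _
  rw [Fintype.sum_sum_type]
  show (∑ x : Fin r, if x = p.1 then 1 else 0) + (∑ x : Fin r × Fin (r-1), if False then 1 else 0) = _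
  simp [cliqueLeavesAdj, Finset.sum_ite_eq, Finset.sum_ite_eq']

lemma cnRed (r : ℕ) : (univ.filter (fun v : CliqueLeavesV r => isRed v)).card = r := by
  rw [Finset.card_filter]
  show (∑ u : Fin r ⊕ Fin r × Fin (r-1), if isRed u then 1 else 0) = _
  rw [Fintype.sum_sum_type]
  simp [isRed]

lemma cnBlue (r : ℕ) : (univ.filter (fun v : CliqueLeavesV r => ¬ isRed v)).card = r * (r-1) := by
  rw [Finset.card_filter]
  show (∑ u : Fin r ⊕ Fin r × Fin (r-1), if ¬ isRed u then 1 else 0) = _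
  rw [Fintype.sum_sum_type]
  simp [isRed]

lemma cERed (r : ℕ) : (univ.filter (fun p : CliqueLeavesV r × CliqueLeavesV r =>
    cliqueLeavesAdj r p.1 p.2 ∧ isRed p.1 ∧ isRed p.2)).card = r * (r - 1) := by
  rw [Finset.card_filter, Fintype.sum_prod_type]
  show (∑ u : Fin r ⊕ Fin r × Fin (r-1), ∑ v : Fin r ⊕ Fin r × Fin (r-1),
    if cliqueLeavesAdj r u v ∧ isRed u ∧ isRed v then 1 else 0) = _
  rw [Fintype.sum_sum_type]
  simp only [Fintype.sum_sum_type, cliqueLeavesAdj, isRed]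
  simp [sum_ite_ne]

lemma cEBlue (r : ℕ) : (univ.filter (fun p : CliqueLeavesV r × CliqueLeavesV r =>
    cliqueLeavesAdj r p.1 p.2 ∧ ¬ isRed p.1 ∧ ¬ isRed p.2)).card = 0 := by
  rw [Finset.card_filter, Fintype.sum_prod_type]
  show (∑ u : Fin r ⊕ Fin r × Fin (r-1), ∑ v : Fin r ⊕ Fin r × Fin (r-1),
    if cliqueLeavesAdj r u v ∧ ¬ isRed u ∧ ¬ isRed v then 1 else 0) = _
  rw [Fintype.sum_sum_type]
  simp only [Fintype.sum_sum_type]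
  simp [cliqueLeavesAdj, isRed]

lemma cDRed (r : ℕ) : (univ.filter (fun p : CliqueLeavesV r × CliqueLeavesV r =>
    cliqueLeavesAdj r p.1 p.2 ∧ isRed p.1)).card = r * (2 * (r - 1)) := by
  rw [Finset.card_filter, Fintype.sum_prod_type]
  show (∑ u : Fin r ⊕ Fin r × Fin (r-1), ∑ v : Fin r ⊕ Fin r × Fin (r-1),
    if cliqueLeavesAdj r u v ∧ isRed u then 1 else 0) = _
  rw [Fintype.sum_sum_type]
  simp only [Fintype.sum_sum_type, cliqueLeavesAdj, isRed]
  simp [sum_ite_ne, fiber1, two_mul, mul_add]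

lemma cDBlue (r : ℕ) : (univ.filter (fun p : CliqueLeavesV r × CliqueLeavesV r =>
    cliqueLeavesAdj r p.1 p.2 ∧ ¬ isRed p.1)).card = r * (r - 1) := by
  rw [Finset.card_filter, Fintype.sum_prod_type]
  show (∑ u : Fin r ⊕ Fin r × Fin (r-1), ∑ v : Fin r ⊕ Fin r × Fin (r-1),
    if cliqueLeavesAdj r u v ∧ ¬ isRed u then 1 else 0) = _
  rw [Fintype.sum_sum_type]
  simp only [Fintype.sum_sum_type]
  simp [cliqueLeavesAdj, isRed, Finset.sum_ite_eq, Fintype.sum_prod_type]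

theorem class_homophily_of_clique_with_leaves (r : ℕ) (hr : 2 ≤ r) :
    let n : ℝ := Fintype.card (CliqueLeavesV r)
    let nRed : ℝ := (univ.filter (fun v : CliqueLeavesV r => isRed v)).card
    let nBlue : ℝ := (univ.filter (fun v : CliqueLeavesV r => ¬ isRed v)).card
    let ERed : ℝ := (univ.filter (fun p : CliqueLeavesV r × CliqueLeavesV r =>
      cliqueLeavesAdj r p.1 p.2 ∧ isRed p.1 ∧ isRed p.2)).card
    let EBlue : ℝ := (univ.filter (fun p : CliqueLeavesV r × CliqueLeavesV r =>
      cliqueLeavesAdj r p.1 p.2 ∧ ¬ isRed p.1 ∧ ¬ isRed p.2)).card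
    let DRed : ℝ := (univ.filter (fun p : CliqueLeavesV r × CliqueLeavesV r =>
      cliqueLeavesAdj r p.1 p.2 ∧ isRed p.1)).card
    let DBlue : ℝ := (univ.filter (fun p : CliqueLeavesV r × CliqueLeavesV r =>
      cliqueLeavesAdj r p.1 p.2 ∧ ¬ isRed p.1)).card
    Fintype.card (CliqueLeavesV r) = r ^ 2 ∧
    (∀ v : CliqueLeavesV r, isRed v →
      (univ.filter (fun u => cliqueLeavesAdj r v u)).card = 2 * (r - 1)) ∧
    (∀ v : CliqueLeavesV r, ¬ isRed v →
      (univ.filter (fun u => cliqueLeavesAdj r v u)).card = 1) ∧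
    (1 / ((2 : ℝ) - 1)) *
      (max (ERed / DRed - nRed / n) 0 + max (EBlue / DBlue - nBlue / n) 0)
      = 1 / 2 - 1 / (r : ℝ) := by
  intro n nRed nBlue ERed EBlue DRed DBlue
  have hcard : Fintype.card (CliqueLeavesV r) = r ^ 2 := by
    rw [cardV, Nat.mul_sub, Nat.mul_one, sq]
    have := Nat.le_mul_of_pos_left r (show 0 < r by omega)
    omega
  refine ⟨hcard, ?_, ?_, ?_⟩
  · rintro (i | p) hv
    · exact degRed r i
    · exact absurd hv (by simp [isRed])
  · rintro (i | p) hv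
    · exact absurd (by trivial) hv
    · exact degBlue r p
  · have hr1 : (1:ℕ) ≤ r := by omega
    have hx0 : (0:ℝ) < (r:ℝ) := by positivity
    have hx2 : (2:ℝ) ≤ (r:ℝ) := by exact_mod_cast hr
    have hxm : (0:ℝ) < (r:ℝ) - 1 := by linarith
    have hn : n = (r:ℝ) * (r:ℝ) := by
      simp only [n, cardV]
      push_cast [Nat.cast_sub hr1]
      ring
    have hnRed : nRed = (r:ℝ) := by simp [nRed, cnRed]
    have hnBlue : nBlue = (r:ℝ) * ((r:ℝ) - 1) := by
      simp only [nBlue, cnBlue]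
      push_cast [Nat.cast_sub hr1]
      ring
    have hERed : ERed = (r:ℝ) * ((r:ℝ) - 1) := by
      simp only [ERed, cERed]
      push_cast [Nat.cast_sub hr1]
      ring
    have hEBlue : EBlue = 0 := by simp [EBlue, cEBlue]
    have hDRed : DRed = (r:ℝ) * (2 * ((r:ℝ) - 1)) := by
      simp only [DRed, cDRed]
      push_cast [Nat.cast_sub hr1]
      ring
    have hDBlue : DBlue = (r:ℝ) * ((r:ℝ) - 1) := by
      simp only [DBlue, cDBlue]
      push_cast [Nat.cast_sub hr1]
      ring
    rw [hn, hnRed, hnBlue, hERed, hEBlue, hDRed, hDBlue]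
    have h1 : (r:ℝ) * ((r:ℝ) - 1) / ((r:ℝ) * (2 * ((r:ℝ) - 1))) - (r:ℝ) / ((r:ℝ) * (r:ℝ))
        = 1 / 2 - 1 / (r:ℝ) := by
      field_simp
    rw [h1]
    have h2 : max (1 / 2 - 1 / (r:ℝ)) 0 = 1 / 2 - 1 / (r:ℝ) := by
      apply max_eq_left
      have : 1 / (r:ℝ) ≤ 1 / 2 := by
        apply one_div_le_one_div_of_le <;> linarith
      linarith
    have h3 : max ((0:ℝ) / ((r:ℝ) * ((r:ℝ) - 1)) - (r:ℝ) * ((r:ℝ) - 1) / ((r:ℝ) * (r:ℝ))) 0 = 0 := by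
      apply max_eq_right
      have : 0 ≤ (r:ℝ) * ((r:ℝ) - 1) / ((r:ℝ) * (r:ℝ)) := by positivity
      simp [zero_div]
      linarith
    rw [h2, h3]
    norm_num
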